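/- There is a bijection between D_{2k}^h, the set of closed cyclic ±1-step paths of length 2k on positive integers containing the value 1 and with first entry h, and C_{2k}^h, the set of (non-cyclic) ±1-step paths (i_1,...,i_{2k+1}) on positive integers with i_1 = 1 and i_{2k+1} = 2h-1. -/

import Mathlib

private lemma aux_ivt (Q : ℕ → ℕ) (a hv : ℕ) (h1 : Q a ≤ hv) :
    ∀ b, a ≤ b → (∀ s, a ≤ s → s < b → ((Q s : ℤ) - Q (s+1)).natAbs = 1) → hv ≤ Q b →
    ∃ s, a ≤ s ∧ s ≤ b ∧ Q s = hv := by
  intro b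
  induction b with
  | zero =>
    intro hab _ h2
    have ha : a = 0 := by omega
    subst ha
    exact ⟨0, le_rfl, le_rfl, by omega⟩
  | succ b ih =>
    intro hab hstep h2
    rcases Nat.lt_or_ge a (b+1) with hlt | hge
    · have hab' : a ≤ b := by omega
      by_cases hc : hv ≤ Q b
      · obtain ⟨s, hs1, hs2, hs3⟩ := ih hab' (fun s u1 u2 => hstep s u1 (by omega)) hc
        exact ⟨s, hs1, by omega, hs3⟩
      · have := hstep b hab' (by omega)
        exact ⟨b+1, by omega, le_rfl, by omega⟩
    · have ha : a = b + 1 := by omega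
      subst ha
      exact ⟨b+1, le_rfl, le_rfl, by omega⟩

private lemma aux_stay (Q : ℕ → ℕ) (b hv m : ℕ)
    (hstep : ∀ s, s < b → ((Q s : ℤ) - Q (s+1)).natAbs = 1)
    (hmax : ∀ s, m < s → s ≤ b → Q s ≠ hv)
    (hend : hv ≤ Q b) :
    ∀ s, m < s → s ≤ b → hv < Q s := by
  intro s hms hsb
  by_contra hcon
  push_neg at hcon
  obtain ⟨t, ht1, ht2, ht3⟩ := aux_ivt Q s hv hcon b hsb (fun u u1 u2 => hstep u u2) hend
  exact hmax t (by omega) ht2 ht3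

private lemma aux_min_lt (k t : ℕ) : min t (2*k) < 2*k+1 :=
  Nat.lt_succ_of_le (min_le_right _ _)

private def auxMD (k : ℕ) (i : ZMod (2*k) → ℕ) : ℕ :=
  Nat.findGreatest (fun t => i (t : ZMod (2*k)) = 1) (2*k)

private def auxToC (k h : ℕ) (i : ZMod (2*k) → ℕ) : Fin (2*k+1) → ℕ :=
  fun s => if s.val ≤ auxMD k i then i (((auxMD k i - s.val : ℕ)) : ZMod (2*k))
           else i ((s.val : ℕ) : ZMod (2*k)) + (h-1)

private def auxMC (k h : ℕ) (q : Fin (2*k+1) → ℕ) : ℕ :=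
  Nat.findGreatest (fun t => q ⟨min t (2*k), aux_min_lt k t⟩ = h) (2*k)

private def auxToD (k h : ℕ) (q : Fin (2*k+1) → ℕ) : ZMod (2*k) → ℕ :=
  fun j => if j.val ≤ auxMC k h q then q ⟨min (auxMC k h q - j.val) (2*k), aux_min_lt k _⟩
           else q ⟨min j.val (2*k), aux_min_lt k _⟩ - (h-1)

private lemma auxToC_spec (k h : ℕ) (hh : 1 ≤ h) [NeZero (2*k)]
    (i : ZMod (2*k) → ℕ)
    (hpos : ∀ j, 1 ≤ i j)
    (hstep : ∀ j, ((i j : ℤ) - i (j+1)).natAbs = 1)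
    (hex : ∃ j, i j = 1)
    (h0 : i 0 = h) :
    (∀ j, 1 ≤ auxToC k h i j) ∧
    (∀ j : Fin (2*k), ((auxToC k h i j.castSucc : ℤ) - auxToC k h i j.succ).natAbs = 1) ∧
    auxToC k h i 0 = 1 ∧
    auxToC k h i (Fin.last (2*k)) = 2*h - 1 := by
  obtain ⟨g, rfl⟩ : ∃ g, h = g + 1 := ⟨h - 1, by omega⟩
  have hstepN : ∀ t : ℕ, ((i ((t:ℕ) : ZMod (2*k)) : ℤ) - i (((t+1 : ℕ)) : ZMod (2*k))).natAbs = 1 := by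
    intro t
    have := hstep ((t : ℕ) : ZMod (2*k))
    rwa [show ((t:ℕ) : ZMod (2*k)) + 1 = (((t+1:ℕ)) : ZMod (2*k)) from by push_cast; ring] at this
  set m := auxMD k i with hm
  have hmle : m ≤ 2*k := Nat.findGreatest_le _
  have hPm : i ((m : ℕ) : ZMod (2*k)) = 1 := by
    obtain ⟨j, hj⟩ := hex
    have hjv : i ((j.val : ℕ) : ZMod (2*k)) = 1 := by
      rw [ZMod.natCast_rightInverse j]; exact hj
    exact Nat.findGreatest_spec (P := fun t => i ((t:ℕ) : ZMod (2*k)) = 1)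
      (le_of_lt (ZMod.val_lt j)) hjv
  have hge2 : ∀ t, m < t → t ≤ 2*k → 2 ≤ i ((t : ℕ) : ZMod (2*k)) := by
    intro t h1 h2
    have h3 : ¬ (i ((t : ℕ) : ZMod (2*k)) = 1) :=
      Nat.findGreatest_is_greatest (P := fun t => i ((t:ℕ) : ZMod (2*k)) = 1) (n := 2*k) h1 h2
    have := hpos ((t : ℕ) : ZMod (2*k))
    omega
  have hP2k : i (((2*k : ℕ)) : ZMod (2*k)) = g + 1 := by
    rw [ZMod.natCast_self]; exact h0
  have key : ∀ t, t < 2*k →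
      ((((if t ≤ m then i (((m - t : ℕ)) : ZMod (2*k)) else i ((t:ℕ) : ZMod (2*k)) + (g+1-1)) : ℕ) : ℤ) -
        ((if t+1 ≤ m then i (((m - (t+1) : ℕ)) : ZMod (2*k)) else i (((t+1:ℕ)) : ZMod (2*k)) + (g+1-1)) : ℕ)).natAbs = 1 := by
    simp only [Nat.add_sub_cancel]
    intro t ht
    by_cases h1 : t + 1 ≤ m
    · rw [if_pos (by omega : t ≤ m), if_pos h1]
      have := hstepN (m - (t+1))
      rw [show m - (t+1) + 1 = m - t from by omega] at this
      omega
    · by_cases h2 : t ≤ m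
      · have e : t = m := by omega
        rw [if_pos h2, if_neg h1]
        have e1 : i (((m - t : ℕ)) : ZMod (2*k)) = g + 1 := by
          rw [show m - t = 0 from by omega, Nat.cast_zero]; exact h0
        have hs := hstepN t
        have e2 : i ((t : ℕ) : ZMod (2*k)) = 1 := by rw [e]; exact hPm
        have hp := hpos (((t+1 : ℕ)) : ZMod (2*k))
        omega
      · rw [if_neg h1, if_neg h2]
        have := hstepN t
        omega
  refine ⟨?_, ?_, ?_, ?_⟩
  · intro s
    dsimp only [auxToC]
    rw [← hm]
    split
    · exact hpos _
    · have := hpos ((s.val : ℕ) : ZMod (2*k)); omega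
  · intro j
    have := key j.val j.isLt
    dsimp only [auxToC]
    rw [← hm]
    simpa [Fin.coe_castSucc, Fin.val_succ] using this
  · dsimp only [auxToC]
    rw [← hm]
    rw [Fin.val_zero, if_pos (Nat.zero_le m), Nat.sub_zero]
    exact hPm
  · dsimp only [auxToC]
    rw [← hm]
    rw [Fin.val_last]
    by_cases hc : 2*k ≤ m
    · rw [if_pos hc]
      have hm2k : m = 2*k := by omega
      rw [hm2k] at hPm
      rw [show m - 2*k = 0 from by omega, Nat.cast_zero, h0]
      omega
    · rw [if_neg hc]
      omega

private lemma auxToD_spec (k h : ℕ) (hk : 0 < k) (hh : 1 ≤ h) [NeZero (2*k)]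
    (q : Fin (2*k+1) → ℕ)
    (hpos : ∀ j, 1 ≤ q j)
    (hstep : ∀ j : Fin (2*k), ((q j.castSucc : ℤ) - q j.succ).natAbs = 1)
    (hq0 : q 0 = 1)
    (hqlast : q (Fin.last (2*k)) = 2*h-1) :
    (∀ j, 1 ≤ auxToD k h q j) ∧
    (∀ j, ((auxToD k h q j : ℤ) - auxToD k h q (j+1)).natAbs = 1) ∧
    (∃ j, auxToD k h q j = 1) ∧
    auxToD k h q 0 = h := by
  obtain ⟨g, rfl⟩ : ∃ g, h = g + 1 := ⟨h - 1, by omega⟩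
  haveI : Fact (1 < 2*k) := ⟨by omega⟩
  have hQ0 : q ⟨min 0 (2*k), aux_min_lt k 0⟩ = 1 := by
    rw [show (⟨min 0 (2*k), aux_min_lt k 0⟩ : Fin (2*k+1)) = 0 from by
      apply Fin.ext; show min 0 (2*k) = (0 : Fin (2*k+1)).val; simp]
    exact hq0
  have hQlast : q ⟨min (2*k) (2*k), aux_min_lt k (2*k)⟩ = 2*(g+1)-1 := by
    rw [show (⟨min (2*k) (2*k), aux_min_lt k (2*k)⟩ : Fin (2*k+1)) = Fin.last (2*k) from by
      apply Fin.ext; show min (2*k) (2*k) = (Fin.last (2*k)).val; simp]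
    exact hqlast
  have hstepQ : ∀ u, u < 2*k →
      ((q ⟨min u (2*k), aux_min_lt k u⟩ : ℤ) - q ⟨min (u+1) (2*k), aux_min_lt k (u+1)⟩).natAbs = 1 := by
    intro u hu
    rw [show (⟨min u (2*k), aux_min_lt k u⟩ : Fin (2*k+1)) = (⟨u, hu⟩ : Fin (2*k)).castSucc from by
          apply Fin.ext; show min u (2*k) = u; omega,
        show (⟨min (u+1) (2*k), aux_min_lt k (u+1)⟩ : Fin (2*k+1)) = (⟨u, hu⟩ : Fin (2*k)).succ from by
          apply Fin.ext; show min (u+1) (2*k) = u+1; omega]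
    exact hstep ⟨u, hu⟩
  have hex2 : ∃ s, s ≤ 2*k ∧ q ⟨min s (2*k), aux_min_lt k s⟩ = g+1 := by
    obtain ⟨s, _, h2, h3⟩ := aux_ivt (fun t => q ⟨min t (2*k), aux_min_lt k t⟩) 0 (g+1)
      (show q ⟨min 0 (2*k), aux_min_lt k 0⟩ ≤ g+1 from by omega) (2*k) (by omega)
      (fun s _ hs => hstepQ s hs)
      (show g+1 ≤ q ⟨min (2*k) (2*k), aux_min_lt k (2*k)⟩ from by omega)
    exact ⟨s, h2, h3⟩
  have hmle : auxMC k (g+1) q ≤ 2*k := Nat.findGreatest_le _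
  have hQm : q ⟨min (auxMC k (g+1) q) (2*k), aux_min_lt k (auxMC k (g+1) q)⟩ = g+1 := by
    obtain ⟨s, hs1, hs2⟩ := hex2
    exact Nat.findGreatest_spec (P := fun t => q ⟨min t (2*k), aux_min_lt k t⟩ = g+1) hs1 hs2
  have hmax : ∀ s, auxMC k (g+1) q < s → s ≤ 2*k → ¬ (q ⟨min s (2*k), aux_min_lt k s⟩ = g+1) := by
    intro s h1 h2
    exact Nat.findGreatest_is_greatest
      (P := fun t => q ⟨min t (2*k), aux_min_lt k t⟩ = g+1) (n := 2*k) h1 h2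
  have hstay : ∀ s, auxMC k (g+1) q < s → s ≤ 2*k → g+1 < q ⟨min s (2*k), aux_min_lt k s⟩ := by
    intro s h1 h2
    exact aux_stay (fun t => q ⟨min t (2*k), aux_min_lt k t⟩) (2*k) (g+1) (auxMC k (g+1) q)
      (fun u hu => hstepQ u hu) hmax
      (show g+1 ≤ q ⟨min (2*k) (2*k), aux_min_lt k (2*k)⟩ from by omega) s h1 h2
  have hm2k : auxMC k (g+1) q = 2*k → g = 0 := by
    intro e; rw [e] at hQm; omega
  have key : ∀ t, t < 2*k →
      ((((if t ≤ auxMC k (g+1) q then q ⟨min (auxMC k (g+1) q - t) (2*k), aux_min_lt k (auxMC k (g+1) q - t)⟩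
          else q ⟨min t (2*k), aux_min_lt k t⟩ - (g+1-1)) : ℕ) : ℤ) -
        ((if t+1 ≤ auxMC k (g+1) q then q ⟨min (auxMC k (g+1) q - (t+1)) (2*k), aux_min_lt k (auxMC k (g+1) q - (t+1))⟩
          else q ⟨min (t+1) (2*k), aux_min_lt k (t+1)⟩ - (g+1-1)) : ℕ)).natAbs = 1 := by
    intro t ht
    by_cases h1 : t+1 ≤ auxMC k (g+1) q
    · rw [if_pos (show t ≤ auxMC k (g+1) q by omega), if_pos h1]
      have h3 := hstepQ (auxMC k (g+1) q - (t+1)) (by omega)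
      rw [show auxMC k (g+1) q - (t+1) + 1 = auxMC k (g+1) q - t from by omega] at h3
      omega
    · by_cases h2 : t ≤ auxMC k (g+1) q
      · rw [if_pos h2, if_neg h1]
        have e0 : q ⟨min (auxMC k (g+1) q - t) (2*k), aux_min_lt k (auxMC k (g+1) q - t)⟩ = 1 := by
          rw [show auxMC k (g+1) q - t = 0 from by omega]; exact hQ0
        have e1 : q ⟨min t (2*k), aux_min_lt k t⟩ = g+1 := by
          rw [show t = auxMC k (g+1) q from by omega]; exact hQm
        have e2 := hstepQ t ht
        have e3 := hstay (t+1) (by omega) (by omega)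
        omega
      · rw [if_neg h1, if_neg h2]
        have e2 := hstepQ t ht
        have e3 := hstay t (by omega) (by omega)
        have e4 := hstay (t+1) (by omega) (by omega)
        omega
  have hG2k : (if 2*k ≤ auxMC k (g+1) q then q ⟨min (auxMC k (g+1) q - 2*k) (2*k), aux_min_lt k (auxMC k (g+1) q - 2*k)⟩
      else q ⟨min (2*k) (2*k), aux_min_lt k (2*k)⟩ - (g+1-1)) = g+1 := by
    by_cases hc : 2*k ≤ auxMC k (g+1) q
    · rw [if_pos hc]
      have h1 : g = 0 := hm2k (by omega)
      rw [show auxMC k (g+1) q - 2*k = 0 from by omega]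
      omega
    · rw [if_neg hc]
      omega
  refine ⟨?_, ?_, ?_, ?_⟩
  · intro j
    dsimp only [auxToD]
    by_cases hc : j.val ≤ auxMC k (g+1) q
    · simp only [if_pos hc]; exact hpos _
    · simp only [if_neg hc]
      have := hstay j.val (by omega) (le_of_lt (ZMod.val_lt j))
      omega
  · intro j
    dsimp only [auxToD]
    have hjlt : j.val < 2*k := ZMod.val_lt j
    have hadd : (j + 1).val = (j.val + 1) % (2*k) := by rw [ZMod.val_add, ZMod.val_one]
    by_cases hw : j.val + 1 < 2*k
    · simp only [hadd, Nat.mod_eq_of_lt hw]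
      exact key j.val hjlt
    · have h2k : j.val + 1 = 2*k := by omega
      simp only [hadd, h2k, Nat.mod_self]
      have hk1 := key j.val hjlt
      rw [h2k] at hk1
      simp only [if_pos (Nat.zero_le (auxMC k (g+1) q)), Nat.sub_zero]
      omega
  · by_cases hc : auxMC k (g+1) q < 2*k
    · refine ⟨((auxMC k (g+1) q : ℕ) : ZMod (2*k)), ?_⟩
      dsimp only [auxToD]
      have hv : ((auxMC k (g+1) q : ℕ) : ZMod (2*k)).val = auxMC k (g+1) q :=
        ZMod.val_cast_of_lt hc
      simp only [hv, if_pos (le_refl (auxMC k (g+1) q)), Nat.sub_self]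
      omega
    · refine ⟨0, ?_⟩
      dsimp only [auxToD]
      simp only [ZMod.val_zero, if_pos (Nat.zero_le (auxMC k (g+1) q)), Nat.sub_zero]
      have h1 : g = 0 := hm2k (by omega)
      omega
  · dsimp only [auxToD]
    simp only [ZMod.val_zero, if_pos (Nat.zero_le (auxMC k (g+1) q)), Nat.sub_zero]
    omega

private lemma aux_round1 (k h : ℕ) (hk : 0 < k) (hh : 1 ≤ h) [NeZero (2*k)]
    (i : ZMod (2*k) → ℕ)
    (hpos : ∀ j, 1 ≤ i j)
    (hstep : ∀ j, ((i j : ℤ) - i (j+1)).natAbs = 1)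
    (hex : ∃ j, i j = 1)
    (h0 : i 0 = h) :
    auxToD k h (auxToC k h i) = i := by
  obtain ⟨g, rfl⟩ : ∃ g, h = g + 1 := ⟨h - 1, by omega⟩
  have hmle : auxMD k i ≤ 2*k := Nat.findGreatest_le _
  have hPm : i ((auxMD k i : ℕ) : ZMod (2*k)) = 1 := by
    obtain ⟨j, hj⟩ := hex
    have hjv : i ((j.val : ℕ) : ZMod (2*k)) = 1 := by
      rw [ZMod.natCast_rightInverse j]; exact hj
    exact Nat.findGreatest_spec (P := fun t => i ((t:ℕ) : ZMod (2*k)) = 1)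
      (le_of_lt (ZMod.val_lt j)) hjv
  have hge2 : ∀ t, auxMD k i < t → t ≤ 2*k → 2 ≤ i ((t : ℕ) : ZMod (2*k)) := by
    intro t h1 h2
    have h3 : ¬ (i ((t : ℕ) : ZMod (2*k)) = 1) :=
      Nat.findGreatest_is_greatest (P := fun t => i ((t:ℕ) : ZMod (2*k)) = 1) (n := 2*k) h1 h2
    have := hpos ((t : ℕ) : ZMod (2*k))
    omega
  have hF1 : ∀ X, X ≤ auxMD k i → ∀ (pf : min X (2*k) < 2*k+1),
      auxToC k (g+1) i ⟨min X (2*k), pf⟩ = i ((auxMD k i - X : ℕ) : ZMod (2*k)) := by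
    intro X hX pf
    dsimp only [auxToC]
    show (if min X (2 * k) ≤ auxMD k i then i ((auxMD k i - min X (2 * k) : ℕ) : ZMod (2*k)) else i ((min X (2 * k) : ℕ) : ZMod (2*k)) + (g + 1 - 1)) = _
    rw [min_eq_left (le_trans hX hmle), if_pos hX]
  have hF2 : ∀ X, auxMD k i < X → X ≤ 2*k → ∀ (pf : min X (2*k) < 2*k+1),
      auxToC k (g+1) i ⟨min X (2*k), pf⟩ = i ((X : ℕ) : ZMod (2*k)) + (g+1-1) := by
    intro X h1 h2 pf
    dsimp only [auxToC]
    show (if min X (2 * k) ≤ auxMD k i then i ((auxMD k i - min X (2 * k) : ℕ) : ZMod (2*k)) else i ((min X (2 * k) : ℕ) : ZMod (2*k)) + (g + 1 - 1)) = _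
    rw [min_eq_left h2, if_neg (by omega)]
  have predD : auxToC k (g+1) i ⟨min (auxMD k i) (2*k), aux_min_lt k (auxMD k i)⟩ = g+1 := by
    rw [hF1 (auxMD k i) le_rfl, Nat.sub_self, Nat.cast_zero]
    exact h0
  have le1 : auxMD k i ≤ auxMC k (g+1) (auxToC k (g+1) i) :=
    Nat.le_findGreatest
      (P := fun t => auxToC k (g+1) i ⟨min t (2*k), aux_min_lt k t⟩ = g+1) hmle predD
  have le2 : auxMC k (g+1) (auxToC k (g+1) i) ≤ auxMD k i := by
    by_contra hlt
    push_neg at hlt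
    have hspec : auxToC k (g+1) i ⟨min (auxMC k (g+1) (auxToC k (g+1) i)) (2*k),
        aux_min_lt k (auxMC k (g+1) (auxToC k (g+1) i))⟩ = g+1 :=
      Nat.findGreatest_spec
        (P := fun t => auxToC k (g+1) i ⟨min t (2*k), aux_min_lt k t⟩ = g+1) hmle predD
    rw [hF2 _ hlt (Nat.findGreatest_le _)] at hspec
    have := hge2 (auxMC k (g+1) (auxToC k (g+1) i)) hlt (Nat.findGreatest_le _)
    omega
  have hA : auxMC k (g+1) (auxToC k (g+1) i) = auxMD k i := le_antisymm le2 le1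
  funext j
  dsimp only [auxToD]
  simp only [hA]
  by_cases hc : j.val ≤ auxMD k i
  · rw [if_pos hc]
    rw [hF1 (auxMD k i - j.val) (by omega)]
    rw [show auxMD k i - (auxMD k i - j.val) = j.val from by omega]
    rw [ZMod.natCast_rightInverse j]
  · rw [if_neg hc]
    rw [hF2 j.val (by omega) (le_of_lt (ZMod.val_lt j))]
    rw [ZMod.natCast_rightInverse j]
    omega

private lemma aux_round2 (k h : ℕ) (hk : 0 < k) (hh : 1 ≤ h) [NeZero (2*k)]
    (q : Fin (2*k+1) → ℕ)
    (hpos : ∀ j, 1 ≤ q j)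
    (hstep : ∀ j : Fin (2*k), ((q j.castSucc : ℤ) - q j.succ).natAbs = 1)
    (hq0 : q 0 = 1)
    (hqlast : q (Fin.last (2*k)) = 2*h-1) :
    auxToC k h (auxToD k h q) = q := by
  obtain ⟨g, rfl⟩ : ∃ g, h = g + 1 := ⟨h - 1, by omega⟩
  have hQ0 : q ⟨min 0 (2*k), aux_min_lt k 0⟩ = 1 := by
    rw [show (⟨min 0 (2*k), aux_min_lt k 0⟩ : Fin (2*k+1)) = 0 from by
      apply Fin.ext; show min 0 (2*k) = (0 : Fin (2*k+1)).val; simp]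
    exact hq0
  have hQlast : q ⟨min (2*k) (2*k), aux_min_lt k (2*k)⟩ = 2*(g+1)-1 := by
    rw [show (⟨min (2*k) (2*k), aux_min_lt k (2*k)⟩ : Fin (2*k+1)) = Fin.last (2*k) from by
      apply Fin.ext; show min (2*k) (2*k) = (Fin.last (2*k)).val; simp]
    exact hqlast
  have hstepQ : ∀ u, u < 2*k →
      ((q ⟨min u (2*k), aux_min_lt k u⟩ : ℤ) - q ⟨min (u+1) (2*k), aux_min_lt k (u+1)⟩).natAbs = 1 := by
    intro u hu
    rw [show (⟨min u (2*k), aux_min_lt k u⟩ : Fin (2*k+1)) = (⟨u, hu⟩ : Fin (2*k)).castSucc from by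
          apply Fin.ext; show min u (2*k) = u; omega,
        show (⟨min (u+1) (2*k), aux_min_lt k (u+1)⟩ : Fin (2*k+1)) = (⟨u, hu⟩ : Fin (2*k)).succ from by
          apply Fin.ext; show min (u+1) (2*k) = u+1; omega]
    exact hstep ⟨u, hu⟩
  have hex2 : ∃ s, s ≤ 2*k ∧ q ⟨min s (2*k), aux_min_lt k s⟩ = g+1 := by
    obtain ⟨s, _, h2, h3⟩ := aux_ivt (fun t => q ⟨min t (2*k), aux_min_lt k t⟩) 0 (g+1)
      (show q ⟨min 0 (2*k), aux_min_lt k 0⟩ ≤ g+1 from by omega) (2*k) (by omega)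
      (fun s _ hs => hstepQ s hs)
      (show g+1 ≤ q ⟨min (2*k) (2*k), aux_min_lt k (2*k)⟩ from by omega)
    exact ⟨s, h2, h3⟩
  have hmle : auxMC k (g+1) q ≤ 2*k := Nat.findGreatest_le _
  have hQm : q ⟨min (auxMC k (g+1) q) (2*k), aux_min_lt k (auxMC k (g+1) q)⟩ = g+1 := by
    obtain ⟨s, hs1, hs2⟩ := hex2
    exact Nat.findGreatest_spec (P := fun t => q ⟨min t (2*k), aux_min_lt k t⟩ = g+1) hs1 hs2
  have hmax : ∀ s, auxMC k (g+1) q < s → s ≤ 2*k → ¬ (q ⟨min s (2*k), aux_min_lt k s⟩ = g+1) := by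
    intro s h1 h2
    exact Nat.findGreatest_is_greatest
      (P := fun t => q ⟨min t (2*k), aux_min_lt k t⟩ = g+1) (n := 2*k) h1 h2
  have hstay : ∀ s, auxMC k (g+1) q < s → s ≤ 2*k → g+1 < q ⟨min s (2*k), aux_min_lt k s⟩ := by
    intro s h1 h2
    exact aux_stay (fun t => q ⟨min t (2*k), aux_min_lt k t⟩) (2*k) (g+1) (auxMC k (g+1) q)
      (fun u hu => hstepQ u hu) hmax
      (show g+1 ≤ q ⟨min (2*k) (2*k), aux_min_lt k (2*k)⟩ from by omega) s h1 h2
  have hm2k : auxMC k (g+1) q = 2*k → g = 0 := by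
    intro e; rw [e] at hQm; omega
  -- value lemmas for G := auxToD k (g+1) q
  have hG1 : ∀ X, X ≤ auxMC k (g+1) q → X < 2*k →
      auxToD k (g+1) q ((X : ℕ) : ZMod (2*k)) =
        q ⟨min (auxMC k (g+1) q - X) (2*k), aux_min_lt k (auxMC k (g+1) q - X)⟩ := by
    intro X h1 h2
    dsimp only [auxToD]
    simp only [ZMod.val_cast_of_lt h2]
    rw [if_pos h1]
  have hG2 : ∀ X, auxMC k (g+1) q < X → X < 2*k →
      auxToD k (g+1) q ((X : ℕ) : ZMod (2*k)) =
        q ⟨min X (2*k), aux_min_lt k X⟩ - (g+1-1) := by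
    intro X h1 h2
    dsimp only [auxToD]
    simp only [ZMod.val_cast_of_lt h2]
    rw [if_neg (by omega)]
  have hG0 : auxToD k (g+1) q 0 =
      q ⟨min (auxMC k (g+1) q) (2*k), aux_min_lt k (auxMC k (g+1) q)⟩ := by
    dsimp only [auxToD]
    simp only [ZMod.val_zero, Nat.sub_zero]
    rw [if_pos (Nat.zero_le _)]
  have predB : auxToD k (g+1) q ((auxMC k (g+1) q : ℕ) : ZMod (2*k)) = 1 := by
    by_cases hcm : auxMC k (g+1) q < 2*k
    · rw [hG1 (auxMC k (g+1) q) le_rfl hcm]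
      simp only [Nat.sub_self]
      exact hQ0
    · have e : auxMC k (g+1) q = 2*k := by omega
      have hg0 : g = 0 := hm2k e
      rw [show ((auxMC k (g+1) q : ℕ) : ZMod (2*k)) = 0 from by rw [e]; exact ZMod.natCast_self _]
      rw [hG0]
      omega
  have le1 : auxMC k (g+1) q ≤ auxMD k (auxToD k (g+1) q) :=
    Nat.le_findGreatest
      (P := fun t => auxToD k (g+1) q ((t:ℕ) : ZMod (2*k)) = 1) hmle predB
  have le2 : auxMD k (auxToD k (g+1) q) ≤ auxMC k (g+1) q := by
    by_contra hlt
    push_neg at hlt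
    have hmle2 : auxMD k (auxToD k (g+1) q) ≤ 2*k := Nat.findGreatest_le _
    have hspecB : auxToD k (g+1) q ((auxMD k (auxToD k (g+1) q) : ℕ) : ZMod (2*k)) = 1 :=
      Nat.findGreatest_spec
        (P := fun t => auxToD k (g+1) q ((t:ℕ) : ZMod (2*k)) = 1) hmle predB
    by_cases hd : auxMD k (auxToD k (g+1) q) < 2*k
    · rw [hG2 _ hlt hd] at hspecB
      have := hstay (auxMD k (auxToD k (g+1) q)) hlt (by omega)
      omega
    · have e2 : auxMD k (auxToD k (g+1) q) = 2*k := by omega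
      rw [e2] at hspecB
      rw [show ((2*k : ℕ) : ZMod (2*k)) = 0 from ZMod.natCast_self _] at hspecB
      rw [hG0] at hspecB
      have hg0 : g = 0 := by omega
      have h2klem : 2*k ≤ auxMC k (g+1) q :=
        Nat.le_findGreatest (P := fun t => q ⟨min t (2*k), aux_min_lt k t⟩ = g+1) le_rfl
          (show q ⟨min (2*k) (2*k), aux_min_lt k (2*k)⟩ = g+1 from by omega)
      omega
  have hB : auxMD k (auxToD k (g+1) q) = auxMC k (g+1) q := le_antisymm le2 le1
  funext s
  have hsl : s.val < 2*k+1 := s.isLt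
  dsimp only [auxToC]
  simp only [hB]
  by_cases hc : s.val ≤ auxMC k (g+1) q
  · rw [if_pos hc]
    by_cases hd : auxMC k (g+1) q - s.val < 2*k
    · rw [hG1 (auxMC k (g+1) q - s.val) (by omega) hd]
      simp only [show auxMC k (g+1) q - (auxMC k (g+1) q - s.val) = s.val from by omega]
      rw [show (⟨min s.val (2*k), aux_min_lt k s.val⟩ : Fin (2*k+1)) = s from by
        apply Fin.ext; show min s.val (2*k) = s.val; omega]
    · have e : auxMC k (g+1) q - s.val = 2*k := by omega
      have hg0 : g = 0 := hm2k (by omega)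
      have hs0 : s = 0 := by
        apply Fin.ext; rw [Fin.val_zero]; omega
      rw [e, show ((2*k : ℕ) : ZMod (2*k)) = 0 from ZMod.natCast_self _, hG0, hs0]
      omega
  · rw [if_neg hc]
    push_neg at hc
    by_cases hd : s.val < 2*k
    · rw [hG2 s.val hc hd]
      have hsv := hstay s.val hc (by omega)
      have hqs : q ⟨min s.val (2*k), aux_min_lt k s.val⟩ = q s := by
        rw [show (⟨min s.val (2*k), aux_min_lt k s.val⟩ : Fin (2*k+1)) = s from by
          apply Fin.ext; show min s.val (2*k) = s.val; omega]
      omega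
    · have e : s.val = 2*k := by omega
      have hslast : s = Fin.last (2*k) := by
        apply Fin.ext; rw [Fin.val_last]; exact e
      rw [e, show ((2*k : ℕ) : ZMod (2*k)) = 0 from ZMod.natCast_self _, hG0, hslast]
      omega


/-- There is a bijection between `D_{2k}^h`, the set of closed cyclic
±1-step paths of length `2k` on the positive integers containing the value 1 and with
first entry `h`, and `C_{2k}^h`, the set of (non-cyclic) ±1-step paths
`(i_1,…,i_{2k+1})` on the positive integers with `i_1 = 1` and `i_{2k+1} = 2h-1`. -/
theorem equiv_D_C (k h : ℕ) (hk : 0 < k) (hh : 1 ≤ h) [NeZero (2 * k)] :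
    Nonempty (
      {i : ZMod (2 * k) → ℕ //
        (∀ j, 1 ≤ i j) ∧
        (∀ j, ((i j : ℤ) - i (j + 1)).natAbs = 1) ∧
        (∃ j, i j = 1) ∧
        i 0 = h} ≃
      {i : Fin (2 * k + 1) → ℕ //
        (∀ j, 1 ≤ i j) ∧
        (∀ j : Fin (2 * k), ((i j.castSucc : ℤ) - i j.succ).natAbs = 1) ∧
        i 0 = 1 ∧
        i (Fin.last (2 * k)) = 2 * h - 1}) := by
  exact ⟨{
    toFun := fun d => ⟨auxToC k h d.1,
      auxToC_spec k h hh d.1 d.2.1 d.2.2.1 d.2.2.2.1 d.2.2.2.2⟩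
    invFun := fun c => ⟨auxToD k h c.1,
      auxToD_spec k h hk hh c.1 c.2.1 c.2.2.1 c.2.2.2.1 c.2.2.2.2⟩
    left_inv := fun d => Subtype.ext
      (aux_round1 k h hk hh d.1 d.2.1 d.2.2.1 d.2.2.2.1 d.2.2.2.2)
    right_inv := fun c => Subtype.ext
      (aux_round2 k h hk hh c.1 c.2.1 c.2.2.1 c.2.2.2.1 c.2.2.2.2) }⟩
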